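/- The series ∑_{m=1}^∞ (binomial(2m, m-1)/(m·4^m))² converges to 16/π - 5. -/

import Mathlib

open Real Filter Finset Stirling Topology

noncomputable def cb (n : ℕ) : ℝ := (Nat.centralBinom n : ℝ) / 4 ^ n

lemma cb_succ (n : ℕ) : cb (n + 1) = cb n * (2 * n + 1) / (n + 1) / 2 := by
  have h : ((n : ℝ) + 1) * Nat.centralBinom (n + 1)
      = 2 * (2 * n + 1) * Nat.centralBinom n := by
    exact_mod_cast Nat.succ_mul_centralBinom_succ n
  unfold cb
  rw [pow_succ]
  have hn : ((n : ℝ) + 1) ≠ 0 := by positivity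
  field_simp
  linear_combination 2 * h

lemma cb_sqrt (n : ℕ) (hn : 1 ≤ n) :
    cb n * Real.sqrt n = stirlingSeq (2 * n) / stirlingSeq n ^ 2 := by
  have hn0 : (0:ℝ) < n := by exact_mod_cast hn
  have hs : (0:ℝ) < Real.sqrt n := Real.sqrt_pos.2 hn0
  have hs2 : Real.sqrt n ^ 2 = n := Real.sq_sqrt hn0.le
  have h2n : Real.sqrt (2 * (n:ℝ)) ^ 2 = 2 * n :=
    Real.sq_sqrt (by positivity)
  have h4n : Real.sqrt (2 * ((2 * n : ℕ) : ℝ)) = 2 * Real.sqrt n := by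
    push_cast
    rw [show (2 : ℝ) * (2 * n) = 4 * n by ring,
      Real.sqrt_mul (by norm_num) (n : ℝ),
      show Real.sqrt 4 = 2 by
        rw [show (4:ℝ) = 2 ^ 2 by norm_num, Real.sqrt_sq (by norm_num)]]
  have hcb : cb n = ((2 * n).factorial : ℝ) / ((n.factorial : ℝ) ^ 2 * 4 ^ n) := by
    unfold cb Nat.centralBinom
    rw [Nat.cast_choose ℝ (by omega : n ≤ 2 * n), show 2 * n - n = n by omega]
    ring
  rw [hcb]
  unfold stirlingSeq
  rw [h4n]
  have he : Real.exp 1 ≠ 0 := (Real.exp_pos 1).ne'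
  have hf : (n.factorial : ℝ) ≠ 0 := by exact_mod_cast n.factorial_ne_zero
  have h4 : (4:ℝ) ^ n = 2 ^ n * 2 ^ n := by
    rw [show (4:ℝ) = 2 * 2 by norm_num, mul_pow]
  push_cast
  rw [div_pow (n.factorial : ℝ)]
  field_simp
  rw [h4]
  rw [show (2:ℕ) * n = n + n from two_mul n]
  rw [hs2, h2n, mul_div_assoc, mul_pow, pow_add, pow_add]
  ring

lemma tendsto_B : Tendsto (fun n : ℕ => (16 * (n:ℝ) + 4) * cb n ^ 2) atTop (𝓝 (16 / π)) := by
  have hπ : (0:ℝ) < π := Real.pi_pos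
  have h2n : Tendsto (fun n : ℕ => 2 * n) atTop atTop :=
    tendsto_atTop_mono (fun n => by simp only [id_eq]; omega) tendsto_id
  have h1 : Tendsto (fun n : ℕ => stirlingSeq (2 * n)) atTop (𝓝 (Real.sqrt π)) :=
    tendsto_stirlingSeq_sqrt_pi.comp h2n
  have h2 : Tendsto (fun n : ℕ => stirlingSeq n ^ 2) atTop (𝓝 (Real.sqrt π ^ 2)) :=
    tendsto_stirlingSeq_sqrt_pi.pow 2
  have hsp : Real.sqrt π ^ 2 = π := Real.sq_sqrt hπ.le
  have hF : Tendsto (fun n : ℕ =>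
      (16 + 4 / (n:ℝ)) * (stirlingSeq (2 * n) / stirlingSeq n ^ 2) ^ 2) atTop
      (𝓝 ((16 + 0) * (Real.sqrt π / Real.sqrt π ^ 2) ^ 2)) := by
    exact (tendsto_const_nhds.add (tendsto_const_div_atTop_nhds_zero_nat 4)).mul
      ((h1.div h2 (by rw [hsp]; exact hπ.ne')).pow 2)
  have hval : (16 + 0 : ℝ) * (Real.sqrt π / Real.sqrt π ^ 2) ^ 2 = 16 / π := by
    rw [hsp]
    rw [div_pow, Real.sq_sqrt hπ.le]
    field_simp
    ring
  rw [hval] at hF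
  apply hF.congr'
  filter_upwards [eventually_ge_atTop 1] with n hn
  have hn0 : (0:ℝ) < n := by exact_mod_cast hn
  rw [← cb_sqrt n hn]
  have hs2 : Real.sqrt n ^ 2 = n := Real.sq_sqrt hn0.le
  rw [mul_pow, hs2]
  field_simp

lemma term_eq (m : ℕ) :
    (((2 * (m + 1)).choose m : ℝ) / ((m + 1) * 4 ^ (m + 1))) ^ 2
      = (16 * ((m:ℝ) + 2) + 4) * cb (m + 2) ^ 2
        - (16 * ((m:ℝ) + 1) + 4) * cb (m + 1) ^ 2 := by
  have h : ((2 * (m + 1)).choose (m + 1) : ℝ) * (m + 1)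
      = ((2 * (m + 1)).choose m : ℝ) * (m + 2) := by
    have := Nat.choose_succ_right_eq (2 * (m + 1)) m
    have h2 : 2 * (m + 1) - m = m + 2 := by omega
    rw [h2] at this
    exact_mod_cast this
  have hcb : ((2 * (m + 1)).choose m : ℝ) = cb (m + 1) * 4 ^ (m + 1) * (m + 1) / (m + 2) := by
    have : ((2 * (m + 1)).choose (m + 1) : ℝ) = cb (m + 1) * 4 ^ (m + 1) := by
      unfold cb Nat.centralBinom
      field_simp
    rw [this] at h
    field_simp at h ⊢
    linarith [h]
  rw [hcb, show m + 2 = (m + 1) + 1 from rfl, cb_succ (m + 1)]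
  have h1 : ((m:ℝ) + 1) ≠ 0 := by positivity
  have h2 : ((m:ℝ) + 2) ≠ 0 := by positivity
  push_cast
  field_simp
  ring

theorem stmt_6 :
    HasSum (fun m : ℕ =>
      (((2 * (m + 1)).choose m : ℝ) / ((m + 1) * 4 ^ (m + 1))) ^ 2)
      (16 / π - 5) := by
  rw [hasSum_iff_tendsto_nat_of_nonneg (fun i => sq_nonneg _)]
  have hsum : ∀ N : ℕ, ∑ i ∈ Finset.range N,
      (((2 * (i + 1)).choose i : ℝ) / ((i + 1) * 4 ^ (i + 1))) ^ 2
      = (16 * ((N:ℝ) + 1) + 4) * cb (N + 1) ^ 2 - 5 := by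
    intro N
    set g : ℕ → ℝ := fun m => (16 * ((m:ℝ) + 1) + 4) * cb (m + 1) ^ 2 with hg
    have hterm : ∀ i : ℕ,
        (((2 * (i + 1)).choose i : ℝ) / ((i + 1) * 4 ^ (i + 1))) ^ 2
          = g (i + 1) - g i := by
      intro i
      simp only [hg]
      rw [term_eq i]
      push_cast
      ring_nf
    rw [Finset.sum_congr rfl (fun i _ => hterm i), Finset.sum_range_sub g N]
    have hcb1 : cb 1 = 1 / 2 := by
      unfold cb Nat.centralBinom
      norm_num
    simp only [hg, hcb1]
    norm_num
  have hlim : Tendsto (fun N : ℕ => (16 * ((N:ℝ) + 1) + 4) * cb (N + 1) ^ 2 - 5)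
      atTop (𝓝 (16 / π - 5)) := by
    have := (tendsto_B.comp (tendsto_add_atTop_nat 1)).sub (tendsto_const_nhds : Tendsto (fun _ : ℕ => (5:ℝ)) atTop (𝓝 5))
    apply this.congr
    intro n
    simp only [Function.comp]
    push_cast
    ring_nf
  exact (Tendsto.congr (fun N => (hsum N).symm) hlim)
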